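/- Let H be a q-sparse graph on n vertices with 1/n < q < 1/√n, let x ≠ y be vertices, and let K_0,…,K_m be (x,y)-paths with ℓ edges each, chosen greedily so that each K_i (i ≥ 1) minimizes the number of new edges |K_i \ ∪_{j<i} K_j| among paths not contained in ∪_{j<i} K_j, with the union R containing all (x,y)-paths of length ℓ. If (nq)^ℓ < n^{1−δc} (where nq = n^c, δ ∈ (0,1)) and K is an (x,y)-path of length ℓ not among K_0,…,K_m, then there exists i ∈ [0,m] with |K ∩ K_i| ≥ ℓ/8 (intersection measured in edges). -/

import Mathlib

open SimpleGraph

/-- Number of (unlabeled) copies of `J` in `G`: subgraphs of `G` isomorphic to `J`. -/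
noncomputable def copyCount {α β : Type*} (J : SimpleGraph α) (G : SimpleGraph β) : ℕ :=
  Set.ncard {A : G.Subgraph | Nonempty (A.coe ≃g J)}

/-- Expected number of copies of `J` in the Erdős–Rényi random graph `G(n,q)`. -/
noncomputable def expCopies {α : Type*} (n : ℕ) (J : SimpleGraph α) (q : ℝ) : ℝ :=
  (copyCount J (⊤ : SimpleGraph (Fin n)) : ℝ) * q ^ (Set.ncard J.edgeSet)

/-- `H` is `q`-sparse: every subgraph `I ⊆ H` has `E_q X_I ≥ 1`. -/
def qSparse {n : ℕ} (q : ℝ) (H : SimpleGraph (Fin n)) : Prop :=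
  ∀ I : H.Subgraph, 1 ≤ expCopies n I.coe q
/-- Edge set of a walk, as a finset. -/
def walkEdges {n : ℕ} {H : SimpleGraph (Fin n)} {x y : Fin n} (p : H.Walk x y) :
    Finset (Sym2 (Fin n)) := p.edges.toFinset

/-- Union of the edge sets of the walks `K j` for `j < i`. -/
def prevUnion {n m : ℕ} {H : SimpleGraph (Fin n)} {x y : Fin n}
    (K : Fin (m + 1) → H.Walk x y) (i : Fin (m + 1)) : Finset (Sym2 (Fin n)) :=
  (Finset.univ.filter fun j => j < i).biUnion fun j => walkEdges (K j)

private lemma mem_support_of_mem_edges' {V : Type*} {G : SimpleGraph V} {u y : V}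
    (p : G.Walk u y) {e : Sym2 V} {v : V} (he : e ∈ p.edges) (hv : v ∈ e) :
    v ∈ p.support := by
  induction e with
  | _ a b =>
    rcases Sym2.mem_iff.mp hv with rfl | rfl
    · exact p.fst_mem_support_of_mem_edges he
    · exact p.snd_mem_support_of_mem_edges he

private lemma lemC {V : Type*} [DecidableEq V] {G : SimpleGraph V}
    (T : Finset (Sym2 V)) (VT : Finset V)
    (hT : ∀ e ∈ T, ∀ v, v ∈ e → v ∈ VT) :
    ∀ {u y : V} (p : G.Walk u y), p.IsTrail → y ∈ VT →
      (p.support.toFinset \ VT).card ≤ (p.edges.toFinset \ T).card := by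
  intro u y p
  induction p with
  | nil => intro _ hy; simp [hy]
  | @cons u w y h p ih =>
    intro ht hy
    rw [Walk.isTrail_cons] at ht
    obtain ⟨ht', hne⟩ := ht
    rw [Walk.support_cons, Walk.edges_cons, List.toFinset_cons, List.toFinset_cons]
    by_cases hu : u ∈ VT
    · rw [Finset.insert_sdiff_of_mem _ hu]
      refine (ih ht' hy).trans (Finset.card_le_card ?_)
      exact Finset.sdiff_subset_sdiff (Finset.subset_insert _ _) le_rfl
    · have henotT : s(u, w) ∉ T := fun hT' => hu (hT _ hT' u (by simp))
      rw [Finset.insert_sdiff_of_notMem _ henotT,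
        Finset.insert_sdiff_of_notMem _ hu]
      have h1 : (insert u (p.support.toFinset \ VT)).card ≤
          (p.support.toFinset \ VT).card + 1 := Finset.card_insert_le _ _
      have h2 : (insert s(u,w) (p.edges.toFinset \ T)).card =
          (p.edges.toFinset \ T).card + 1 := by
        apply Finset.card_insert_of_notMem
        simp [hne]
      have h3 := ih ht' hy
      omega

private lemma lemD {V : Type*} [DecidableEq V] {G : SimpleGraph V}
    (T : Finset (Sym2 V)) (VT : Finset V)
    (hT : ∀ e ∈ T, ∀ v, v ∈ e → v ∈ VT) :
    ∀ {u y : V} (p : G.Walk u y), p.IsTrail → y ∈ VT → u ∈ VT →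
      ¬ (p.edges.toFinset ⊆ T) →
      (p.support.toFinset \ VT).card + 1 ≤ (p.edges.toFinset \ T).card := by
  intro u y p
  induction p with
  | nil => intro _ _ _ hsub; exact absurd (by simp) hsub
  | @cons u w y h p ih =>
    intro ht hy hu hsub
    rw [Walk.isTrail_cons] at ht
    obtain ⟨ht', hne⟩ := ht
    rw [Walk.support_cons, Walk.edges_cons, List.toFinset_cons, List.toFinset_cons] at *
    rw [Finset.insert_sdiff_of_mem _ hu]
    by_cases he : s(u, w) ∈ T
    · rw [Finset.insert_sdiff_of_mem _ he]
      have hw : w ∈ VT := hT _ he w (by simp)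
      have hsub' : ¬ p.edges.toFinset ⊆ T := by
        intro hs
        exact hsub (by
          intro e he'
          rcases Finset.mem_insert.mp he' with rfl | h2
          · exact he
          · exact hs h2)
      exact ih ht' hy hw hsub'
    · rw [Finset.insert_sdiff_of_notMem _ he]
      have h2 : (insert s(u,w) (p.edges.toFinset \ T)).card =
          (p.edges.toFinset \ T).card + 1 := by
        apply Finset.card_insert_of_notMem
        simp [hne]
      have h3 := lemC T VT hT p ht' hy
      omega

private lemma copyCount_le_pow {α : Type*} [Finite α] (J : SimpleGraph α) (n : ℕ) :
    copyCount J (⊤ : SimpleGraph (Fin n)) ≤ n ^ (Nat.card α) := by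
  classical
  unfold _root_.copyCount
  set S := {A : (⊤ : SimpleGraph (Fin n)).Subgraph | Nonempty (A.coe ≃g J)} with hSdef
  rcases Set.eq_empty_or_nonempty S with hS | ⟨A₀, hA₀⟩
  · simp [hS]
  have e₀ : J ≃g (A₀.coe) := (Classical.choice hA₀).symm
  let f0 : α → Fin n := fun a => ((e₀ a : A₀.verts) : Fin n)
  let g : (⊤ : SimpleGraph (Fin n)).Subgraph → (α → Fin n) := fun A =>
    if h : Nonempty (A.coe ≃g J) then (fun a => (((Classical.choice h).symm a : A.verts) : Fin n))
    else f0
  have hg : ∀ A (h : Nonempty (A.coe ≃g J)),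
      g A = fun a => (((Classical.choice h).symm a : A.verts) : Fin n) := by
    intro A h; simp only [g, dif_pos h]
  have key : ∀ A (h : Nonempty (A.coe ≃g J)),
      (A.verts = Set.range (g A)) ∧
      (∀ u v : Fin n, A.Adj u v ↔ ∃ a b : α, J.Adj a b ∧ g A a = u ∧ g A b = v) := by
    intro A h
    rw [hg A h]
    set φ : A.coe ≃g J := Classical.choice h with hφ
    constructor
    · ext u
      constructor
      · intro hu
        exact ⟨φ ⟨u, hu⟩, by simp⟩
      · rintro ⟨a, rfl⟩
        exact Subtype.coe_prop _
    · intro u v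
      constructor
      · intro hadj
        have hu : u ∈ A.verts := A.edge_vert hadj
        have hv : v ∈ A.verts := A.edge_vert hadj.symm
        refine ⟨φ ⟨u, hu⟩, φ ⟨v, hv⟩, ?_, by simp, by simp⟩
        have : A.coe.Adj ⟨u, hu⟩ ⟨v, hv⟩ := by
          rw [Subgraph.coe_adj]; exact hadj
        exact φ.map_adj_iff.mpr this
      · rintro ⟨a, b, hab, rfl, rfl⟩
        have : A.coe.Adj (φ.symm a) (φ.symm b) := φ.symm.map_adj_iff.mpr hab
        rwa [Subgraph.coe_adj] at this
  have hinj : Set.InjOn g S := by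
    intro A hA B hB hAB
    have kA := key A hA
    have kB := key B hB
    apply SimpleGraph.Subgraph.ext
    · rw [kA.1, kB.1, hAB]
    · ext u v
      rw [kA.2, kB.2, hAB]
  calc S.ncard ≤ (Set.univ : Set (α → Fin n)).ncard :=
        Set.ncard_le_ncard_of_injOn g (fun a _ => Set.mem_univ _) hinj (Set.finite_univ)
    _ = n ^ (Nat.card α) := by
        rw [Set.ncard_univ, Nat.card_fun, Nat.card_eq_fintype_card, Fintype.card_fin]

set_option maxHeartbeats 1000000 in
theorem greedy_path_cover_intersection
    (n m ℓ : ℕ) (q c δ : ℝ) (H : SimpleGraph (Fin n)) (x y : Fin n) (hxy : x ≠ y)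
    (hql : 1 / (n : ℝ) < q) (hqu : q < 1 / Real.sqrt n)
    (hc : (n : ℝ) * q = (n : ℝ) ^ c) (hδ0 : 0 < δ) (hδ1 : δ < 1)
    (hsp : qSparse q H)
    (hell : ((n : ℝ) * q) ^ ℓ < (n : ℝ) ^ (1 - δ * c))
    (K : Fin (m + 1) → H.Walk x y)
    (hKpath : ∀ i, (K i).IsPath ∧ (K i).length = ℓ)
    (hKnew : ∀ i : Fin (m + 1), 0 < (i : ℕ) → ¬ walkEdges (K i) ⊆ prevUnion K i)
    (hKmin : ∀ i : Fin (m + 1), 0 < (i : ℕ) →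
      ∀ Q : H.Walk x y, Q.IsPath → Q.length = ℓ → ¬ walkEdges Q ⊆ prevUnion K i →
        (walkEdges (K i) \ prevUnion K i).card ≤ (walkEdges Q \ prevUnion K i).card)
    (hcover : ∀ Q : H.Walk x y, Q.IsPath → Q.length = ℓ →
      walkEdges Q ⊆ Finset.univ.biUnion fun j => walkEdges (K j)) :
    ∀ Q : H.Walk x y, Q.IsPath → Q.length = ℓ →
      (∀ i, walkEdges Q ≠ walkEdges (K i)) →
      ∃ i, (ℓ : ℝ) / 8 ≤ ((walkEdges Q ∩ walkEdges (K i)).card : ℝ) := by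
  classical
  intro Q hQpath hQlen hQne
  by_contra hcon
  push_neg at hcon
  -- basic numeric facts
  have hn2 : 2 ≤ n := by
    by_contra hn
    interval_cases n
    · simp [Real.sqrt_zero] at hql hqu
      linarith
    · simp [Real.sqrt_one] at hql hqu
      linarith
  have hn0 : (0:ℝ) < n := by positivity
  have hn1 : (1:ℝ) < n := by exact_mod_cast hn2.trans_lt' one_lt_two
  have hq0 : 0 < q := lt_of_le_of_lt (by positivity) hql
  have hnq1 : 1 < (n:ℝ) * q := by
    have := (div_lt_iff₀ hn0).mp hql
    linarith
  have hc0 : 0 < c := by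
    have h1 : (n:ℝ) ^ (0:ℝ) < (n:ℝ) ^ c := by
      rw [Real.rpow_zero, ← hc]; exact hnq1
    exact (Real.rpow_lt_rpow_left_iff hn1).mp h1
  have hcl : c * ℓ < 1 - δ * c := by
    have h1 : ((n:ℝ) * q) ^ ℓ = (n:ℝ) ^ (c * (ℓ:ℝ)) := by
      rw [hc, Real.rpow_mul hn0.le, Real.rpow_natCast]
    rw [h1] at hell
    exact (Real.rpow_lt_rpow_left_iff hn1).mp hell
  have hδc : 0 < δ * c := mul_pos hδ0 hc0
  have hl1 : 1 ≤ ℓ := by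
    rcases Nat.eq_zero_or_pos ℓ with h0 | h; swap
    · exact h
    · exact absurd (Walk.eq_of_length_eq_zero (by rw [hQlen, h0])) hxy
  have hs8 : ∀ j, 8 * (walkEdges Q ∩ walkEdges (K j)).card + 1 ≤ ℓ := by
    intro j
    have h := hcon j
    have h2 : ((8 * (walkEdges Q ∩ walkEdges (K j)).card : ℕ) : ℝ) < (ℓ : ℝ) := by
      push_cast
      linarith
    have := Nat.cast_lt.mp h2
    omega
  -- cardinalities of the paths
  have hwcard : ∀ j, (walkEdges (K j)).card = ℓ := by
    intro j
    rw [walkEdges, List.toFinset_card_of_nodup (hKpath j).1.isTrail.edges_nodup,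
      Walk.length_edges, (hKpath j).2]
  have hQcard : (walkEdges Q).card = ℓ := by
    rw [walkEdges, List.toFinset_card_of_nodup hQpath.isTrail.edges_nodup,
      Walk.length_edges, hQlen]
  have hsuppcard : ∀ j, ((K j).support.toFinset).card = ℓ + 1 := by
    intro j
    rw [List.toFinset_card_of_nodup (hKpath j).1.support_nodup,
      Walk.length_support, (hKpath j).2]
  -- the partial unions
  set S : ℕ → Finset (Sym2 (Fin n)) :=
    fun k => (Finset.univ.filter fun j : Fin (m+1) => (j:ℕ) ≤ k).biUnion
      fun j => walkEdges (K j) with hSdef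
  set VS : ℕ → Finset (Fin n) :=
    fun k => (Finset.univ.filter fun j : Fin (m+1) => (j:ℕ) ≤ k).biUnion
      fun j => (K j).support.toFinset with hVSdef
  have hmemS : ∀ k e, e ∈ S k ↔ ∃ j : Fin (m+1), (j:ℕ) ≤ k ∧ e ∈ walkEdges (K j) := by
    intro k e
    simp [hSdef]
  have hmemVS : ∀ k v, v ∈ VS k ↔ ∃ j : Fin (m+1), (j:ℕ) ≤ k ∧ v ∈ (K j).support.toFinset := by
    intro k v
    simp [hVSdef]
  have hVT : ∀ k, ∀ e ∈ S k, ∀ v, v ∈ e → v ∈ VS k := by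
    intro k e he v hv
    rw [hmemS] at he
    obtain ⟨j, hj, hej⟩ := he
    rw [hmemVS]
    refine ⟨j, hj, ?_⟩
    rw [List.mem_toFinset]
    rw [walkEdges, List.mem_toFinset] at hej
    exact mem_support_of_mem_edges' _ hej hv
  have hxVS : ∀ k, x ∈ VS k := by
    intro k
    rw [hmemVS]
    exact ⟨0, by simp, by simp [Walk.start_mem_support]⟩
  have hyVS : ∀ k, y ∈ VS k := by
    intro k
    rw [hmemVS]
    exact ⟨0, by simp, by simp [Walk.end_mem_support]⟩
  have hSstep : ∀ k (hk : k + 1 < m + 1), S (k+1) = S k ∪ walkEdges (K ⟨k+1, hk⟩) := by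
    intro k hk
    apply Finset.ext
    intro e
    rw [Finset.mem_union, hmemS, hmemS]
    constructor
    · rintro ⟨j, hj, hej⟩
      rcases Nat.lt_or_ge (j:ℕ) (k+1) with h | h
      · exact Or.inl ⟨j, by omega, hej⟩
      · right
        have hje : j = ⟨k+1, hk⟩ := Fin.ext (by simp; omega)
        rwa [hje] at hej
    · rintro (⟨j, hj, hej⟩ | hej)
      · exact ⟨j, by omega, hej⟩
      · exact ⟨⟨k+1, hk⟩, by simp, hej⟩
  have hVSstep : ∀ k (hk : k + 1 < m + 1),
      VS (k+1) = VS k ∪ (K ⟨k+1, hk⟩).support.toFinset := by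
    intro k hk
    apply Finset.ext
    intro v
    rw [Finset.mem_union, hmemVS, hmemVS]
    constructor
    · rintro ⟨j, hj, hej⟩
      rcases Nat.lt_or_ge (j:ℕ) (k+1) with h | h
      · exact Or.inl ⟨j, by omega, hej⟩
      · right
        have hje : j = ⟨k+1, hk⟩ := Fin.ext (by simp; omega)
        rwa [hje] at hej
    · rintro (⟨j, hj, hej⟩ | hej)
      · exact ⟨j, by omega, hej⟩
      · exact ⟨⟨k+1, hk⟩, by simp, hej⟩
  have hprev : ∀ (j : Fin (m+1)), 0 < (j:ℕ) → prevUnion K j = S ((j:ℕ) - 1) := by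
    intro j hj
    apply Finset.ext
    intro e
    rw [hmemS]
    simp only [prevUnion, Finset.mem_biUnion, Finset.mem_filter, Finset.mem_univ, true_and]
    constructor
    · rintro ⟨t, ht, het⟩
      have := Fin.lt_def.mp ht
      exact ⟨t, by omega, het⟩
    · rintro ⟨t, ht, het⟩
      exact ⟨t, by rw [Fin.lt_def]; omega, het⟩
  have hfiltcard : ∀ k, (Finset.univ.filter fun j : Fin (m+1) => (j:ℕ) ≤ k).card ≤ k + 1 := by
    intro k
    have := Finset.card_le_card_of_injOn (fun j : Fin (m+1) => (j:ℕ))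
      (s := Finset.univ.filter fun j : Fin (m+1) => (j:ℕ) ≤ k)
      (t := Finset.range (k+1))
      (by intro j hj
          rw [Finset.mem_coe, Finset.mem_filter] at hj
          simpa using Nat.lt_succ_of_le hj.2)
      (fun a _ b _ h => Fin.ext h)
    simpa using this
  have hScard_le : ∀ k, (S k).card ≤ (k+1) * ℓ := by
    intro k
    refine le_trans (Finset.card_biUnion_le) ?_
    calc ∑ j ∈ (Finset.univ.filter fun j : Fin (m+1) => (j:ℕ) ≤ k), (walkEdges (K j)).card
        = ∑ _j ∈ (Finset.univ.filter fun j : Fin (m+1) => (j:ℕ) ≤ k), ℓ :=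
          Finset.sum_congr rfl (fun j _ => hwcard j)
      _ = (Finset.univ.filter fun j : Fin (m+1) => (j:ℕ) ≤ k).card * ℓ := by
          rw [Finset.sum_const, smul_eq_mul]
      _ ≤ (k+1) * ℓ := Nat.mul_le_mul_right _ (hfiltcard k)
  have hSm : walkEdges Q ⊆ S m := by
    intro e he
    have h := hcover Q hQpath hQlen he
    rw [Finset.mem_biUnion] at h
    obtain ⟨j, _, hej⟩ := h
    rw [hmemS]
    exact ⟨j, by omega, hej⟩
  have hex : ∃ k, walkEdges Q ⊆ S k := ⟨m, hSm⟩
  set i := Nat.find hex with hidef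
  have hQi : walkEdges Q ⊆ S i := Nat.find_spec hex
  have him : i ≤ m := Nat.find_le hSm
  have hmin : ∀ k, k < i → ¬ walkEdges Q ⊆ S k := fun k hk => Nat.find_min hex hk
  -- i ≥ 8 via pigeonhole
  have hi8 : 8 ≤ i := by
    have hsub : walkEdges Q ⊆
        (Finset.univ.filter fun j : Fin (m+1) => (j:ℕ) ≤ i).biUnion
          (fun j => walkEdges Q ∩ walkEdges (K j)) := by
      intro e he
      have h := hQi he
      rw [hmemS] at h
      obtain ⟨j, hj, hej⟩ := h
      rw [Finset.mem_biUnion]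
      exact ⟨j, Finset.mem_filter.mpr ⟨Finset.mem_univ _, hj⟩,
        Finset.mem_inter.mpr ⟨he, hej⟩⟩
    have h1 : ℓ ≤ ∑ j ∈ (Finset.univ.filter fun j : Fin (m+1) => (j:ℕ) ≤ i),
        (walkEdges Q ∩ walkEdges (K j)).card := by
      calc ℓ = (walkEdges Q).card := hQcard.symm
        _ ≤ _ := Finset.card_le_card hsub
        _ ≤ _ := Finset.card_biUnion_le
    have h2 : ∑ j ∈ (Finset.univ.filter fun j : Fin (m+1) => (j:ℕ) ≤ i),
        8 * (walkEdges Q ∩ walkEdges (K j)).card ≤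
        ∑ _j ∈ (Finset.univ.filter fun j : Fin (m+1) => (j:ℕ) ≤ i), (ℓ - 1) :=
      Finset.sum_le_sum (fun j _ => by have := hs8 j; omega)
    have h3 : 8 * ℓ ≤ (i + 1) * (ℓ - 1) := by
      calc 8 * ℓ ≤ 8 * ∑ j ∈ (Finset.univ.filter fun j : Fin (m+1) => (j:ℕ) ≤ i),
            (walkEdges Q ∩ walkEdges (K j)).card := by omega
        _ = ∑ j ∈ (Finset.univ.filter fun j : Fin (m+1) => (j:ℕ) ≤ i),
            8 * (walkEdges Q ∩ walkEdges (K j)).card := Finset.mul_sum _ _ _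
        _ ≤ ∑ _j ∈ (Finset.univ.filter fun j : Fin (m+1) => (j:ℕ) ≤ i), (ℓ - 1) := h2
        _ = (Finset.univ.filter fun j : Fin (m+1) => (j:ℕ) ≤ i).card * (ℓ - 1) := by
            rw [Finset.sum_const, smul_eq_mul]
        _ ≤ (i + 1) * (ℓ - 1) := Nat.mul_le_mul_right _ (hfiltcard i)
    by_contra hlt
    have h4 : (i + 1) * (ℓ - 1) ≤ 8 * (ℓ - 1) := Nat.mul_le_mul_right _ (by omega)
    omega
  -- the number of new edges at each step
  set a : ℕ → ℕ := fun j =>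
    if h : j < m + 1 then (walkEdges (K ⟨j, h⟩) \ S (j-1)).card else 0 with hadef
  have hcardstep : ∀ k (hk : k + 1 < m + 1), (S (k+1)).card = (S k).card + a (k+1) := by
    intro k hk
    rw [hSstep k hk]
    rw [← Finset.union_sdiff_self_eq_union, Finset.card_union_of_disjoint Finset.disjoint_sdiff]
    have : a (k+1) = (walkEdges (K ⟨k+1, hk⟩) \ S k).card := by
      rw [hadef]
      simp only [dif_pos hk, Nat.add_sub_cancel]
    omega
  have hamin : ∀ j, 1 ≤ j → j ≤ i → 8 * a j ≤ (i + 1 - j) * ℓ := by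
    intro j h1 h2
    have hj : j < m + 1 := by omega
    have hj0 : 0 < ((⟨j, hj⟩ : Fin (m+1)) : ℕ) := by exact h1
    have hQn : ¬ walkEdges Q ⊆ S (j-1) := hmin (j-1) (by omega)
    have hQn' : ¬ walkEdges Q ⊆ prevUnion K ⟨j, hj⟩ := by
      rw [hprev _ hj0]
      simpa using hQn
    have hm1 := hKmin ⟨j, hj⟩ hj0 Q hQpath hQlen hQn'
    rw [hprev _ hj0] at hm1
    have hm2 : (walkEdges (K ⟨j, hj⟩) \ S (j-1)).card ≤ (walkEdges Q \ S (j-1)).card := hm1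
    have hsub : walkEdges Q \ S (j-1) ⊆
        (Finset.univ.filter fun t : Fin (m+1) => j ≤ (t:ℕ) ∧ (t:ℕ) ≤ i).biUnion
          (fun t => walkEdges Q ∩ walkEdges (K t)) := by
      intro e he
      rw [Finset.mem_sdiff] at he
      obtain ⟨heQ, heS⟩ := he
      have h := hQi heQ
      rw [hmemS] at h
      obtain ⟨t, ht, het⟩ := h
      have htj : j ≤ (t:ℕ) := by
        by_contra hlt
        exact heS ((hmemS _ _).mpr ⟨t, by omega, het⟩)
      rw [Finset.mem_biUnion]
      exact ⟨t, Finset.mem_filter.mpr ⟨Finset.mem_univ _, htj, ht⟩,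
        Finset.mem_inter.mpr ⟨heQ, het⟩⟩
    have h3 : (walkEdges Q \ S (j-1)).card ≤
        ∑ t ∈ (Finset.univ.filter fun t : Fin (m+1) => j ≤ (t:ℕ) ∧ (t:ℕ) ≤ i),
          (walkEdges Q ∩ walkEdges (K t)).card :=
      le_trans (Finset.card_le_card hsub) Finset.card_biUnion_le
    have h5 : (Finset.univ.filter fun t : Fin (m+1) => j ≤ (t:ℕ) ∧ (t:ℕ) ≤ i).card
        ≤ i + 1 - j := by
      have := Finset.card_le_card_of_injOn (fun t : Fin (m+1) => (t:ℕ))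
        (s := Finset.univ.filter fun t : Fin (m+1) => j ≤ (t:ℕ) ∧ (t:ℕ) ≤ i)
        (t := Finset.Icc j i)
        (by intro t ht
            rw [Finset.mem_coe, Finset.mem_filter] at ht
            simpa [Finset.mem_Icc] using ht.2)
        (fun p _ b _ h => Fin.ext h)
      rwa [Nat.card_Icc] at this
    have h6 : ∑ t ∈ (Finset.univ.filter fun t : Fin (m+1) => j ≤ (t:ℕ) ∧ (t:ℕ) ≤ i),
        8 * (walkEdges Q ∩ walkEdges (K t)).card ≤
        ∑ _t ∈ (Finset.univ.filter fun t : Fin (m+1) => j ≤ (t:ℕ) ∧ (t:ℕ) ≤ i), ℓ :=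
      Finset.sum_le_sum (fun t _ => by have := hs8 t; omega)
    have haj : a j = (walkEdges (K ⟨j, hj⟩) \ S (j-1)).card := by
      rw [hadef]; simp only [dif_pos hj]
    calc 8 * a j = 8 * (walkEdges (K ⟨j, hj⟩) \ S (j-1)).card := by rw [haj]
      _ ≤ 8 * (walkEdges Q \ S (j-1)).card := by omega
      _ ≤ 8 * ∑ t ∈ (Finset.univ.filter fun t : Fin (m+1) => j ≤ (t:ℕ) ∧ (t:ℕ) ≤ i),
            (walkEdges Q ∩ walkEdges (K t)).card := by omega
      _ = ∑ t ∈ (Finset.univ.filter fun t : Fin (m+1) => j ≤ (t:ℕ) ∧ (t:ℕ) ≤ i),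
            8 * (walkEdges Q ∩ walkEdges (K t)).card := Finset.mul_sum _ _ _
      _ ≤ ∑ _t ∈ (Finset.univ.filter fun t : Fin (m+1) => j ≤ (t:ℕ) ∧ (t:ℕ) ≤ i), ℓ := h6
      _ = (Finset.univ.filter fun t : Fin (m+1) => j ≤ (t:ℕ) ∧ (t:ℕ) ≤ i).card * ℓ := by
          rw [Finset.sum_const, smul_eq_mul]
      _ ≤ (i + 1 - j) * ℓ := Nat.mul_le_mul_right _ h5
  -- vertex bound: (VS k).card + k ≤ (S k).card + 1
  have hVB : ∀ k, k ≤ i → (VS k).card + k ≤ (S k).card + 1 := by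
    intro k
    induction k with
    | zero =>
      intro _
      have h1 : VS 0 = (K 0).support.toFinset := by
        apply Finset.ext
        intro v
        rw [hmemVS]
        constructor
        · rintro ⟨j, hj, hej⟩
          have : j = 0 := Fin.ext (by simp only [Fin.val_zero]; omega)
          rwa [this] at hej
        · intro hv
          exact ⟨0, by simp, hv⟩
      have h2 : S 0 = walkEdges (K 0) := by
        apply Finset.ext
        intro e
        rw [hmemS]
        constructor
        · rintro ⟨j, hj, hej⟩
          have : j = 0 := Fin.ext (by simp only [Fin.val_zero]; omega)
          rwa [this] at hej
        · intro hv
          exact ⟨0, by simp, hv⟩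
      rw [h1, h2, hsuppcard 0, hwcard 0]
    | succ k ih =>
      intro hk1
      have hk : k ≤ i := by omega
      have hkm : k + 1 < m + 1 := by omega
      have hnotsub : ¬ (K ⟨k+1, hkm⟩).edges.toFinset ⊆ S k := by
        have h := hKnew ⟨k+1, hkm⟩ (by simp)
        rw [hprev _ (by simp)] at h
        simpa [walkEdges] using h
      have hD := lemD (S k) (VS k) (hVT k) (K ⟨k+1, hkm⟩)
        (hKpath _).1.isTrail (hyVS k) (hxVS k) hnotsub
      have hunion : (VS (k+1)).card ≤ (VS k).card +
          ((K ⟨k+1, hkm⟩).support.toFinset \ VS k).card := by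
        rw [hVSstep k hkm, ← Finset.union_sdiff_self_eq_union]
        exact Finset.card_union_le _ _
      have hcs := hcardstep k hkm
      have haval : a (k+1) = (walkEdges (K ⟨k+1, hkm⟩) \ S k).card := by
        rw [hadef]; simp only [dif_pos hkm, Nat.add_sub_cancel]
      rw [haval] at hcs
      have hD' : ((K ⟨k+1, hkm⟩).support.toFinset \ VS k).card + 1 ≤
          (walkEdges (K ⟨k+1, hkm⟩) \ S k).card := hD
      have := ih hk
      omega
  -- edge count bound over the last 8 steps
  have hchain : ∀ d, d ≤ 8 →
      (S (i - 8 + d)).card ≤ (S (i-8)).card + ∑ k ∈ Finset.range d, a (i - 8 + k + 1) := by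
    intro d
    induction d with
    | zero => intro _; simp
    | succ d ih =>
      intro hd
      have h1 := ih (by omega)
      have hlt : (i - 8 + d) + 1 < m + 1 := by omega
      have h2 := hcardstep (i - 8 + d) hlt
      rw [Finset.sum_range_succ]
      have : i - 8 + (d + 1) = (i - 8 + d) + 1 := by omega
      rw [this]
      omega
  have hEsum : ∑ k ∈ Finset.range 8, 8 * a (i - 8 + k + 1) ≤ 36 * ℓ := by
    have hterm : ∀ k ∈ Finset.range 8, 8 * a (i - 8 + k + 1) ≤ (8 - k) * ℓ := by
      intro k hk
      rw [Finset.mem_range] at hk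
      have h := hamin (i - 8 + k + 1) (by omega) (by omega)
      have he : i + 1 - (i - 8 + k + 1) = 8 - k := by omega
      rwa [he] at h
    calc ∑ k ∈ Finset.range 8, 8 * a (i - 8 + k + 1)
        ≤ ∑ k ∈ Finset.range 8, (8 - k) * ℓ := Finset.sum_le_sum hterm
      _ = (∑ k ∈ Finset.range 8, (8 - k)) * ℓ := by rw [Finset.sum_mul]
      _ = 36 * ℓ := by norm_num [Finset.sum_range_succ]
  have hE : ((S i).card : ℝ) * 8 + 20 * ℓ ≤ 8 * i * ℓ := by
    have h1 := hchain 8 le_rfl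
    have h2 : i - 8 + 8 = i := by omega
    rw [h2] at h1
    have h3 := hScard_le (i - 8)
    have h4 : 8 * (S i).card ≤ 8 * (S (i-8)).card + ∑ k ∈ Finset.range 8, 8 * a (i - 8 + k + 1) := by
      have := Finset.mul_sum (Finset.range 8) (fun k => a (i - 8 + k + 1)) 8
      omega
    have h5 : (S i).card * 8 ≤ 8 * ((i - 8 + 1) * ℓ) + 36 * ℓ := by omega
    have hp : (i : ℝ) - 8 + 1 = ((i - 8 + 1 : ℕ) : ℝ) := by
      push_cast [Nat.cast_sub hi8]
      ring
    have h6 : ((S i).card : ℝ) * 8 ≤ 8 * (((i - 8 + 1 : ℕ) : ℝ) * ℓ) + 36 * ℓ := by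
      exact_mod_cast h5
    rw [← hp] at h6
    have hi8R : (8:ℝ) ≤ i := by exact_mod_cast hi8
    linarith [h6]
  -- build the subgraph on S i
  have hSiH : ∀ e ∈ S i, e ∈ H.edgeSet := by
    intro e he
    rw [hmemS] at he
    obtain ⟨j, _, hej⟩ := he
    rw [walkEdges, List.mem_toFinset] at hej
    exact (K j).edges_subset_edgeSet hej
  let I : H.Subgraph :=
    { verts := ↑(VS i)
      Adj := fun u v => s(u,v) ∈ S i
      adj_sub := fun {u v} h => (H.mem_edgeSet).mp (hSiH _ h)
      edge_vert := fun {u v} h => Finset.mem_coe.mpr (hVT i _ h u (by simp))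
      symm := ⟨fun u v h => by
        show s(v,u) ∈ S i
        rw [Sym2.eq_swap]
        exact h⟩ }
  have hIverts : I.verts = ↑(VS i) := rfl
  haveI : Fintype ↥I.verts := FinsetCoe.fintype (VS i)
  -- edge set cardinality
  have hIedge : (I.coe.edgeSet).ncard = (S i).card := by
    have hinj : Function.Injective (Sym2.map (Subtype.val : I.verts → Fin n)) :=
      Sym2.map.injective Subtype.val_injective
    rw [← Set.ncard_coe_finset (S i), ← Set.ncard_image_of_injective I.coe.edgeSet hinj]
    congr 1
    apply Set.ext
    intro e
    constructor
    · rintro ⟨e', he', rfl⟩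
      induction e' with
      | _ p b =>
        rw [SimpleGraph.mem_edgeSet, Subgraph.coe_adj] at he'
        simpa [Sym2.map_pair_eq] using he'
    · intro he
      have heS : e ∈ S i := he
      induction e with
      | _ p b =>
        have hp : p ∈ VS i := hVT i _ heS p (by simp)
        have hb : b ∈ VS i := hVT i _ heS b (by simp)
        refine ⟨s(⟨p, Finset.mem_coe.mpr hp⟩, ⟨b, Finset.mem_coe.mpr hb⟩), ?_, ?_⟩
        · rw [SimpleGraph.mem_edgeSet, Subgraph.coe_adj]
          exact heS
        · simp [Sym2.map_pair_eq]
    -- note: membership of e ∈ ↑(S i)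
  -- copyCount bound
  have hNcard : Nat.card ↥I.verts = (VS i).card := by
    have : Nat.card ↥I.verts = Nat.card ↥(↑(VS i) : Set (Fin n)) := rfl
    rw [this, Nat.card_coe_set_eq, Set.ncard_coe_finset]
  have hcopy : _root_.copyCount I.coe (⊤ : SimpleGraph (Fin n)) ≤ n ^ (VS i).card := by
    have h := copyCount_le_pow I.coe n
    rwa [hNcard] at h
  -- apply sparsity
  have hspI := hsp I
  rw [expCopies, hIedge] at hspI
  set eN := (S i).card with heN
  set vN := (VS i).card with hvN
  have hqpow : (0:ℝ) < q ^ eN := pow_pos hq0 _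
  have h1 : (1:ℝ) ≤ ((n:ℝ) ^ vN) * q ^ eN := by
    refine hspI.trans (mul_le_mul_of_nonneg_right ?_ hqpow.le)
    exact_mod_cast hcopy
  have hq_eq : q = (n:ℝ) ^ (c - 1 : ℝ) := by
    rw [Real.rpow_sub hn0, Real.rpow_one, ← hc]
    field_simp
  have hnp : ((n:ℝ) ^ vN) * q ^ eN = (n:ℝ) ^ ((vN:ℝ) + (c-1) * eN) := by
    rw [Real.rpow_add hn0, Real.rpow_natCast, hq_eq,
      ← Real.rpow_natCast ((n:ℝ) ^ (c-1 : ℝ)) eN, ← Real.rpow_mul hn0.le]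
  have hexp : (0:ℝ) ≤ (vN:ℝ) + (c-1) * eN := by
    by_contra hneg
    push_neg at hneg
    have h2 := Real.rpow_lt_one_of_one_lt_of_neg hn1 hneg
    rw [← hnp] at h2
    linarith
  -- final contradiction
  have hvB : (vN : ℝ) + i ≤ (eN:ℝ) + 1 := by
    have := hVB i le_rfl
    exact_mod_cast this
  have hi8R : (8:ℝ) ≤ i := by exact_mod_cast hi8
  have hl1R : (1:ℝ) ≤ ℓ := by exact_mod_cast hl1
  -- from hexp and hvB : i ≤ 1 + c * eN
  have hice : (i:ℝ) ≤ 1 + c * eN := by nlinarith [hexp, hvB]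
  -- from hE : c * eN * 8 ≤ c * (8 i ℓ - 20 ℓ) and c * ℓ < 1
  have hclt1 : c * ℓ < 1 := by linarith
  have hEc : c * ((eN:ℝ) * 8 + 20 * ℓ) ≤ c * (8 * i * ℓ) :=
    mul_le_mul_of_nonneg_left hE hc0.le
  have h8i20 : (0:ℝ) ≤ 8 * i - 20 := by linarith
  have hfin : (8 * (i:ℝ) - 20) * (c * ℓ) ≤ (8 * i - 20) * 1 :=
    mul_le_mul_of_nonneg_left hclt1.le h8i20
  nlinarith [hEc, hfin, hice, hi8R]
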